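/- Let (A,↘,↗,↖,↙) be a finite-dimensional quadri-algebra over a field of characteristic zero and let r ∈ A⊗A be skew-symmetric and nondegenerate (so the induced linear map r : A* → A is invertible). Then r is a solution of the Q-equation in A if and only if the bilinear form ω on A defined by ω(x,y) = ⟨r⁻¹(x), y⟩ satisfies ω(z, x≻y) − ω(x, y↙z) + ω(y, z∧x) = 0 and ω(z, x≺y) + ω(x, y∨z) − ω(y, z↗x) = 0 for all x,y,z ∈ A. -/
import Mathlib


open TensorProduct LinearMap Module

/-- Quadri-algebra axioms for the four products ↘ (`dse`), ↗ (`dne`), ↖ (`dnw`), ↙ (`dsw`). -/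
def IsQuadri {K A : Type*} [Field K] [AddCommGroup A] [Module K A]
    (dse dne dnw dsw : A →ₗ[K] A →ₗ[K] A) : Prop :=
  (∀ x y z : A, dnw (dnw x y) z = dnw x (dse y z + dne y z + dnw y z + dsw y z)) ∧
  (∀ x y z : A, dnw (dne x y) z = dne x (dnw y z + dsw y z)) ∧
  (∀ x y z : A, dne (dne x y + dnw x y) z = dne x (dne y z + dse y z)) ∧
  (∀ x y z : A, dnw (dsw x y) z = dsw x (dne y z + dnw y z)) ∧
  (∀ x y z : A, dnw (dse x y) z = dse x (dnw y z)) ∧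
  (∀ x y z : A, dne (dse x y + dsw x y) z = dse x (dne y z)) ∧
  (∀ x y z : A, dsw (dnw x y + dsw x y) z = dsw x (dse y z + dsw y z)) ∧
  (∀ x y z : A, dsw (dne x y + dse x y) z = dse x (dsw y z)) ∧
  (∀ x y z : A, dse (dse x y + dne x y + dnw x y + dsw x y) z = dse x (dse y z))

/-- `r₁₂ ∘ r₁₃` for `r ∈ A ⊗ A`: `Σ (aᵢ ∘ aⱼ) ⊗ bᵢ ⊗ bⱼ`. -/
noncomputable def tprod12_13 {K A : Type*} [Field K] [AddCommGroup A] [Module K A]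
    (m : A →ₗ[K] A →ₗ[K] A) (r : A ⊗[K] A) : A ⊗[K] (A ⊗[K] A) :=
  (TensorProduct.map (TensorProduct.lift m) LinearMap.id)
    ((TensorProduct.tensorTensorTensorComm K A A A A) (r ⊗ₜ[K] r))

/-- `r₁₃ ∘ r₂₃` for `r ∈ A ⊗ A`: `Σ aᵢ ⊗ aⱼ ⊗ (bᵢ ∘ bⱼ)`. -/
noncomputable def tprod13_23 {K A : Type*} [Field K] [AddCommGroup A] [Module K A]
    (m : A →ₗ[K] A →ₗ[K] A) (r : A ⊗[K] A) : A ⊗[K] (A ⊗[K] A) :=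
  (TensorProduct.assoc K A A A)
    ((TensorProduct.map LinearMap.id (TensorProduct.lift m))
      ((TensorProduct.tensorTensorTensorComm K A A A A) (r ⊗ₜ[K] r)))

/-- `r₂₃ ∘ r₁₂` for `r ∈ A ⊗ A`: `Σ aᵢ ⊗ (aⱼ ∘ bᵢ) ⊗ bⱼ`. -/
noncomputable def tprod23_12 {K A : Type*} [Field K] [AddCommGroup A] [Module K A]
    (m : A →ₗ[K] A →ₗ[K] A) (r : A ⊗[K] A) : A ⊗[K] (A ⊗[K] A) :=
  (TensorProduct.map LinearMap.id (TensorProduct.comm K A A).toLinearMap)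
    ((TensorProduct.assoc K A A A)
      ((TensorProduct.map LinearMap.id (TensorProduct.lift m))
        ((TensorProduct.tensorTensorTensorComm K A A A A)
          ((TensorProduct.map (TensorProduct.comm K A A).toLinearMap LinearMap.id)
            ((TensorProduct.tensorTensorTensorComm K A A A A) (r ⊗ₜ[K] r))))))

/-- The linear map `A* → A` induced by `r ∈ A ⊗ A`, `v* ↦ Σ ⟨v*, bᵢ⟩ aᵢ`. -/
noncomputable def rmap (K A : Type*) [Field K] [AddCommGroup A] [Module K A] :
    A ⊗[K] A →ₗ[K] Module.Dual K A →ₗ[K] A :=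
  (dualTensorHom K (Module.Dual K A) A) ∘ₗ
    (TensorProduct.map (Module.Dual.eval K A) LinearMap.id) ∘ₗ
    (TensorProduct.comm K A A).toLinearMap

section Aux

variable {K A : Type*} [Field K] [AddCommGroup A] [Module K A]

/-- Evaluation of a triple of functionals on `A ⊗ (A ⊗ A)`. -/
noncomputable def ev3 (f g h : Module.Dual K A) : A ⊗[K] (A ⊗[K] A) →ₗ[K] K :=
  TensorProduct.lift (((LinearMap.mul K K) ∘ₗ f).compl₂
    (TensorProduct.lift (((LinearMap.mul K K) ∘ₗ g).compl₂ h)))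

@[simp] lemma ev3_tmul (f g h : Module.Dual K A) (a b c : A) :
    ev3 f g h (a ⊗ₜ[K] (b ⊗ₜ[K] c)) = f a * (g b * h c) := by
  simp [ev3]

@[simp] lemma rmap_tmul (a b : A) (f : Module.Dual K A) :
    rmap K A (a ⊗ₜ[K] b) f = f b • a := by
  simp [rmap]

lemma ev3_sep [FiniteDimensional K A] (t : A ⊗[K] (A ⊗[K] A))
    (ht : ∀ f g h : Module.Dual K A, ev3 f g h t = 0) : t = 0 := by
  classical
  set b := Module.finBasis K A with hb
  set B := b.tensorProduct (b.tensorProduct b) with hB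
  have key : ∀ (i j k) (u : A ⊗[K] (A ⊗[K] A)),
      B.repr u (i, (j, k)) = ev3 (b.coord i) (b.coord j) (b.coord k) u := by
    intro i j k u
    have : (Finsupp.lapply (R := K) ((i : Fin _), ((j : Fin _), (k : Fin _))) ∘ₗ
        (B.repr : A ⊗[K] (A ⊗[K] A) →ₗ[K] _))
        = ev3 (b.coord i) (b.coord j) (b.coord k) := by
      apply TensorProduct.ext'
      intro a y
      induction y with
      | zero => simp
      | tmul c d =>
          simp only [LinearMap.coe_comp, Function.comp_apply,
            LinearEquiv.coe_coe, Finsupp.lapply_apply, hB,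
            Basis.tensorProduct_repr_tmul_apply, Basis.coord_apply]
          simp [ev3]
          ring
      | add y₁ y₂ h1 h2 =>
          simp only [TensorProduct.tmul_add, map_add] at h1 h2 ⊢
          rw [h1, h2]
    exact congrFun (congrArg (fun (φ : _ →ₗ[K] K) => φ.toFun) this) u
  have hz : B.repr t = 0 := by
    ext i
    obtain ⟨i, j, k⟩ := i
    rw [Finsupp.coe_zero, Pi.zero_apply, key i j k t, ht]
  have := B.repr.injective (a₁ := t) (a₂ := 0) (by simpa using hz)
  simpa using this

lemma ev13_aux (m : A →ₗ[K] A →ₗ[K] A) (f g h : Module.Dual K A) (u v : A ⊗[K] A) :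
    ev3 f g h ((TensorProduct.assoc K A A A)
      ((TensorProduct.map LinearMap.id (TensorProduct.lift m))
        ((TensorProduct.tensorTensorTensorComm K A A A A) (u ⊗ₜ[K] v))))
    = h (m (rmap K A ((TensorProduct.comm K A A) u) f)
          (rmap K A ((TensorProduct.comm K A A) v) g)) := by
  induction u with
  | zero => simp
  | add u₁ u₂ h1 h2 =>
      simp only [TensorProduct.add_tmul, map_add, LinearMap.add_apply] at h1 h2 ⊢
      rw [h1, h2]
  | tmul a b =>
    induction v with
    | zero => simp
    | add v₁ v₂ h1 h2 =>
        simp only [TensorProduct.tmul_add, map_add, LinearMap.add_apply] at h1 h2 ⊢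
        rw [h1, h2]
    | tmul c d =>
        simp [TensorProduct.tensorTensorTensorComm_tmul, mul_comm, mul_assoc, mul_left_comm]

lemma ev12_aux (m : A →ₗ[K] A →ₗ[K] A) (f g h : Module.Dual K A) (u v : A ⊗[K] A) :
    ev3 f g h ((TensorProduct.map (TensorProduct.lift m) LinearMap.id)
        ((TensorProduct.tensorTensorTensorComm K A A A A) (u ⊗ₜ[K] v)))
    = f (m (rmap K A u g) (rmap K A v h)) := by
  induction u with
  | zero => simp
  | add u₁ u₂ h1 h2 =>
      simp only [TensorProduct.add_tmul, map_add, LinearMap.add_apply] at h1 h2 ⊢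
      rw [h1, h2]
  | tmul a b =>
    induction v with
    | zero => simp
    | add v₁ v₂ h1 h2 =>
        simp only [TensorProduct.tmul_add, map_add, LinearMap.add_apply] at h1 h2 ⊢
        rw [h1, h2]
    | tmul c d =>
        simp [TensorProduct.tensorTensorTensorComm_tmul, mul_comm, mul_assoc, mul_left_comm]

lemma ev23_aux (m : A →ₗ[K] A →ₗ[K] A) (f g h : Module.Dual K A) (u v : A ⊗[K] A) :
    ev3 f g h ((TensorProduct.map LinearMap.id (TensorProduct.comm K A A).toLinearMap)
      ((TensorProduct.assoc K A A A)
        ((TensorProduct.map LinearMap.id (TensorProduct.lift m))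
          ((TensorProduct.tensorTensorTensorComm K A A A A)
            ((TensorProduct.map (TensorProduct.comm K A A).toLinearMap LinearMap.id)
              ((TensorProduct.tensorTensorTensorComm K A A A A) (u ⊗ₜ[K] v)))))))
    = g (m (rmap K A u h) (rmap K A ((TensorProduct.comm K A A) v) f)) := by
  induction u with
  | zero => simp
  | add u₁ u₂ h1 h2 =>
      simp only [TensorProduct.add_tmul, map_add, LinearMap.add_apply] at h1 h2 ⊢
      rw [h1, h2]
  | tmul a b =>
    induction v with
    | zero => simp
    | add v₁ v₂ h1 h2 =>
        simp only [TensorProduct.tmul_add, map_add, LinearMap.add_apply] at h1 h2 ⊢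
        rw [h1, h2]
    | tmul c d =>
        simp [TensorProduct.tensorTensorTensorComm_tmul, mul_comm, mul_assoc, mul_left_comm]

end Aux

/-- Theorem 4.3.6: for a nondegenerate skew-symmetric `r ∈ A ⊗ A` over a
finite-dimensional quadri-algebra `(A, ↘, ↗, ↖, ↙)` (with inverse `s = r⁻¹` of the
induced map `A* → A`), `r` solves the `Q`-equation iff the bilinear form
`ω(x, y) = ⟨r⁻¹ x, y⟩` satisfies `ω(z, x≻y) − ω(x, y↙z) + ω(y, z∧x) = 0` and
`ω(z, x≺y) + ω(x, y∨z) − ω(y, z↗x) = 0` for all `x, y, z`. -/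
theorem Q_equation_iff_inverse_form_conditions
    {K A : Type*} [Field K] [CharZero K] [AddCommGroup A] [Module K A]
    [FiniteDimensional K A]
    (dse dne dnw dsw : A →ₗ[K] A →ₗ[K] A)
    (hq : IsQuadri dse dne dnw dsw)
    (r : A ⊗[K] A)
    (hskew : (TensorProduct.comm K A A) r = - r)
    (s : A →ₗ[K] Module.Dual K A)
    (hs1 : ∀ x : A, rmap K A r (s x) = x)
    (hs2 : ∀ f : Module.Dual K A, s (rmap K A r f) = f) :
    ((tprod13_23 (dne + dse) r
        = tprod23_12 dne r + tprod23_12 dnw r + tprod12_13 dsw r) ∧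
     (tprod13_23 (dnw + dsw) r
        = - tprod23_12 dne r - tprod12_13 dse r - tprod12_13 dsw r)) ↔
    ((∀ x y z : A,
        s z (dne x y + dse x y) - s x (dsw y z) + s y (dne z x + dnw z x) = 0) ∧
     (∀ x y z : A,
        s z (dnw x y + dsw x y) + s x (dse y z + dsw y z) - s y (dne z x) = 0)) := by
  have hsurj : ∀ f : Module.Dual K A, ∃ x : A, s x = f := fun f => ⟨rmap K A r f, hs2 f⟩
  have hneg : ∀ x : A, rmap K A ((TensorProduct.comm K A A) r) (s x) = -x := by
    intro x
    rw [hskew, map_neg]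
    simp [hs1 x]
  have E13 : ∀ (m : A →ₗ[K] A →ₗ[K] A) (x y z : A),
      ev3 (s x) (s y) (s z) (tprod13_23 m r) = s z (m x y) := by
    intro m x y z
    rw [tprod13_23, ev13_aux, hneg, hneg]
    simp
  have E12 : ∀ (m : A →ₗ[K] A →ₗ[K] A) (x y z : A),
      ev3 (s x) (s y) (s z) (tprod12_13 m r) = s x (m y z) := by
    intro m x y z
    rw [tprod12_13, ev12_aux, hs1, hs1]
  have E23 : ∀ (m : A →ₗ[K] A →ₗ[K] A) (x y z : A),
      ev3 (s x) (s y) (s z) (tprod23_12 m r) = - s y (m z x) := by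
    intro m x y z
    rw [tprod23_12, ev23_aux, hs1, hneg]
    simp
  constructor
  · rintro ⟨h1, h2⟩
    constructor
    · intro x y z
      have e1 := congrArg (ev3 (s x) (s y) (s z)) h1
      simp only [map_add, E13, E23, E12, LinearMap.add_apply] at e1
      simp only [map_add]
      linear_combination e1
    · intro x y z
      have e2 := congrArg (ev3 (s x) (s y) (s z)) h2
      simp only [map_add, map_neg, map_sub, E13, E23, E12, LinearMap.add_apply] at e2
      simp only [map_add]
      linear_combination e2
  · rintro ⟨h1, h2⟩
    constructor
    · apply eq_of_sub_eq_zero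
      apply ev3_sep
      intro f g h
      obtain ⟨x, rfl⟩ := hsurj f
      obtain ⟨y, rfl⟩ := hsurj g
      obtain ⟨z, rfl⟩ := hsurj h
      simp only [map_sub, map_add, E13, E23, E12, LinearMap.add_apply]
      have := h1 x y z
      simp only [map_add] at this
      linear_combination this
    · apply eq_of_sub_eq_zero
      apply ev3_sep
      intro f g h
      obtain ⟨x, rfl⟩ := hsurj f
      obtain ⟨y, rfl⟩ := hsurj g
      obtain ⟨z, rfl⟩ := hsurj h
      simp only [map_sub, map_add, map_neg, E13, E23, E12, LinearMap.add_apply]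
      have := h2 x y z
      simp only [map_add] at this
      linear_combination this
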